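/- Every direct summand of a dual π-Rickart module is dual π-Rickart: if M = N ⊕ P is dual π-Rickart, then N is dual π-Rickart (as a module with endomorphism ring End_R(N)). -/

import Mathlib

/-- A direct summand of a dual π-Rickart module is dual π-Rickart. -/
theorem dualPiRickart_of_summand
    {R M : Type*} [Ring R] [AddCommGroup M] [Module R M]
    (N P : Submodule R M) (hNP : IsCompl N P)
    (hdpr : ∀ f : Module.End R M, ∃ (e : Module.End R M) (n : ℕ),
      0 < n ∧ IsIdempotentElem e ∧ LinearMap.range (f ^ n) = LinearMap.range e) :
    ∀ f : Module.End R N, ∃ (e : Module.End R N) (n : ℕ),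
      0 < n ∧ IsIdempotentElem e ∧ LinearMap.range (f ^ n) = LinearMap.range e := by
  intro f
  set p : M →ₗ[R] N := N.projectionOnto P hNP with hp
  set F : Module.End R M := N.subtype ∘ₗ (f ∘ₗ p) with hFdef
  have hFpow : ∀ n : ℕ, (F ^ (n + 1)) = N.subtype ∘ₗ ((f ^ (n + 1)) ∘ₗ p) := by
    intro n
    induction n with
    | zero => simp [hFdef]
    | succ n ih =>
      have h2 : F ^ (n + 2) = F * F ^ (n + 1) := (pow_succ' F (n + 1))
      rw [h2, ih]
      ext x
      simp only [hFdef, hp, Module.End.mul_apply, LinearMap.coe_comp, Function.comp_apply,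
        Submodule.coe_subtype, Submodule.projectionOnto_apply_left]
      simp [← Module.End.mul_apply, ← pow_succ, ← pow_succ']
  obtain ⟨e, n, hn, he, hrange⟩ := hdpr F
  obtain ⟨m, rfl⟩ : ∃ m, n = m + 1 := ⟨n - 1, (Nat.succ_pred_eq_of_pos hn).symm⟩
  have hFN : ∀ x : M, (F ^ (m + 1)) x ∈ N := by
    intro x
    rw [hFpow]
    exact ((f ^ (m + 1)) (p x)).2
  have heN : ∀ x : M, e x ∈ N := by
    intro x
    have hx : e x ∈ LinearMap.range e := ⟨x, rfl⟩
    rw [← hrange] at hx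
    obtain ⟨y, hy⟩ := hx
    rw [← hy]
    exact hFN y
  set e' : Module.End R N := LinearMap.codRestrict N (e ∘ₗ N.subtype) (fun x => heN x) with he'def
  refine ⟨e', m + 1, Nat.succ_pos m, ?_, ?_⟩
  · ext x
    have := congrArg (fun g : Module.End R M => g (e x)) he
    exact (congrArg (fun g : Module.End R M => g (↑x)) he)
  · apply le_antisymm
    · rintro y ⟨x, rfl⟩
      -- show f^(m+1) x ∈ range e'
      have h1 : (↑((f ^ (m + 1)) x) : M) ∈ LinearMap.range (F ^ (m + 1)) := by
        refine ⟨(x : M), ?_⟩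
        rw [hFpow]
        simp [hp, Submodule.projectionOnto_apply_left]
      rw [hrange] at h1
      obtain ⟨z, hz⟩ := h1
      refine ⟨(f ^ (m + 1)) x, ?_⟩
      apply Subtype.ext
      have hee : e (e z) = e z := congrArg (fun g : Module.End R M => g z) he
      show e (↑((f ^ (m + 1)) x)) = ↑((f ^ (m + 1)) x)
      rw [← hz, hee]
    · rintro y ⟨x, rfl⟩
      have h1 : e (↑x) ∈ LinearMap.range e := ⟨↑x, rfl⟩
      rw [← hrange] at h1
      obtain ⟨z, hz⟩ := h1
      rw [hFpow] at hz
      refine ⟨p z, ?_⟩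
      apply Subtype.ext
      show (↑((f ^ (m + 1)) (p z)) : M) = e ↑x
      exact hz
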